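/- Let G = (V,E) and G' = (V',E') be finite simple graphs with disjoint vertex sets and H = G ⊔ G'. Then Tχ^L_H(q) = C(|V|+|V'|, |V|) · Tχ^L_G(q) · Tχ^L_{G'}(q), where Tχ^L denotes the sum of the chromatic quasisymmetric function over all bijective labelings of the vertices. -/

import Mathlib

/-- The disjoint union of two simple graphs. -/
def sumGraph {V V' : Type*} (G : SimpleGraph V) (G' : SimpleGraph V') :
    SimpleGraph (V ⊕ V') where
  Adj x y :=
    match x, y with
    | Sum.inl a, Sum.inl b => G.Adj a b
    | Sum.inr a, Sum.inr b => G'.Adj a b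
    | _, _ => False
  symm := by
    constructor
    rintro (a | a) (b | b) h
    · exact G.adj_symm h
    · exact h.elim
    · exact h.elim
    · exact G'.adj_symm h
  loopless := by
    constructor
    rintro (a | a) h
    · exact G.loopless.irrefl a h
    · exact G'.loopless.irrefl a h

open scoped Classical in
/-- The total labeling chromatic quasisymmetric function of `G`, truncated to the color
set `Fin c`: the sum over all bijective labelings and proper colorings of
`q^(number of ascents) · x^κ`. -/
noncomputable def TchiL {V : Type*} [Fintype V] (G : SimpleGraph V) (c : ℕ) :
    MvPolynomial (Fin c) (Polynomial ℚ) :=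
  ∑ p ∈ Finset.univ.filter (fun p : (V ≃ Fin (Fintype.card V)) × (V → Fin c) =>
      ∀ u v, G.Adj u v → p.2 u ≠ p.2 v),
    MvPolynomial.C (Polynomial.X ^
      (Finset.univ.filter fun q : V × V =>
        G.Adj q.1 q.2 ∧ p.1 q.1 < p.1 q.2 ∧ p.2 q.1 < p.2 q.2).card) *
      ∏ v, MvPolynomial.X (p.2 v)


open scoped Classical in
noncomputable def ascCount {V : Type*} [Fintype V] (G : SimpleGraph V) {α : Type*} [Preorder α]
    (L : V → α) {c : ℕ} (κ : V → Fin c) : ℕ :=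
  (Finset.univ.filter fun q : V × V => G.Adj q.1 q.2 ∧ L q.1 < L q.2 ∧ κ q.1 < κ q.2).card

open scoped Classical in
lemma ascCount_congr {V : Type*} [Fintype V] (G : SimpleGraph V) {α β : Type*} [Preorder α]
    [Preorder β] (L : V → α) (L' : V → β) (h : ∀ u v, L u < L v ↔ L' u < L' v) {c : ℕ}
    (κ : V → Fin c) : ascCount G L κ = ascCount G L' κ := by
  unfold ascCount
  congr 1
  apply Finset.filter_congr
  intro q _
  simp [h]

open scoped Classical in
lemma ascCount_sum {V V' : Type*} [Fintype V] [Fintype V'] (G : SimpleGraph V)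
    (G' : SimpleGraph V') {α : Type*} [Preorder α] (L : V ⊕ V' → α) {c : ℕ}
    (κ : V ⊕ V' → Fin c) :
    ascCount (sumGraph G G') L κ =
      ascCount G (L ∘ Sum.inl) (κ ∘ Sum.inl) + ascCount G' (L ∘ Sum.inr) (κ ∘ Sum.inr) := by
  unfold ascCount
  rw [Finset.card_filter, Finset.card_filter, Finset.card_filter,
    Fintype.sum_prod_type, Fintype.sum_prod_type, Fintype.sum_prod_type,
    Fintype.sum_sum_type]
  simp only [Fintype.sum_sum_type]
  simp [sumGraph, Function.comp]
  simp only [Finset.card_filter]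
  congr!

open scoped Classical in
lemma TchiL_eq {V : Type*} [Fintype V] (G : SimpleGraph V) (c : ℕ) :
    TchiL G c = ∑ L : V ≃ Fin (Fintype.card V), ∑ κ : V → Fin c,
      if ∀ u v, G.Adj u v → κ u ≠ κ v then
        MvPolynomial.C (Polynomial.X ^ ascCount G (⇑L) κ) * ∏ v, MvPolynomial.X (κ v)
      else 0 := by
  unfold ascCount
  rw [TchiL, Finset.sum_filter, Fintype.sum_prod_type]
  exact Finset.sum_congr rfl fun x _ => Finset.sum_congr rfl fun y _ => by congr

noncomputable def midEquiv {n m : ℕ} (s : Finset (Fin (n + m))) (h : s.card = n) :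
    Fin n ⊕ Fin m ≃ Fin (n + m) :=
  (Equiv.sumCongr (s.orderIsoOfFin h).toEquiv
    ((sᶜ.orderIsoOfFin (by simp [Finset.card_compl, h])).toEquiv.trans
      (Equiv.subtypeEquivRight fun x => Finset.mem_compl))).trans
    (Equiv.sumCompl (· ∈ s))

lemma midEquiv_inl {n m : ℕ} (s : Finset (Fin (n + m))) (h : s.card = n) (i : Fin n) :
    midEquiv s h (Sum.inl i) = ↑(s.orderIsoOfFin h i) := rfl

lemma midEquiv_inr {n m : ℕ} (s : Finset (Fin (n + m))) (h : s.card = n) (j : Fin m) :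
    midEquiv s h (Sum.inr j) =
      ↑(sᶜ.orderIsoOfFin (by simp [Finset.card_compl, h]) j) := rfl

lemma midEquiv_inl_lt_iff {n m : ℕ} (s : Finset (Fin (n + m))) (h : s.card = n) (i j : Fin n) :
    midEquiv s h (Sum.inl i) < midEquiv s h (Sum.inl j) ↔ i < j := by
  rw [midEquiv_inl, midEquiv_inl, Finset.coe_orderIsoOfFin_apply, Finset.coe_orderIsoOfFin_apply,
    OrderEmbedding.lt_iff_lt]

lemma midEquiv_inr_lt_iff {n m : ℕ} (s : Finset (Fin (n + m))) (h : s.card = n) (i j : Fin m) :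
    midEquiv s h (Sum.inr i) < midEquiv s h (Sum.inr j) ↔ i < j := by
  rw [midEquiv_inr, midEquiv_inr, Finset.coe_orderIsoOfFin_apply, Finset.coe_orderIsoOfFin_apply,
    OrderEmbedding.lt_iff_lt]

noncomputable def toLabel {V V' : Type*} [Fintype V] [Fintype V']
    (t : {s : Finset (Fin (Fintype.card V + Fintype.card V')) // s.card = Fintype.card V}
      × (V ≃ Fin (Fintype.card V)) × (V' ≃ Fin (Fintype.card V'))) :
    (V ⊕ V') ≃ Fin (Fintype.card (V ⊕ V')) :=
  ((Equiv.sumCongr t.2.1 t.2.2).trans (midEquiv t.1.1 t.1.2)).trans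
    (finCongr (Fintype.card_sum).symm)

lemma toLabel_apply_inl {V V' : Type*} [Fintype V] [Fintype V']
    (t : {s : Finset (Fin (Fintype.card V + Fintype.card V')) // s.card = Fintype.card V}
      × (V ≃ Fin (Fintype.card V)) × (V' ≃ Fin (Fintype.card V'))) (v : V) :
    toLabel t (Sum.inl v) = finCongr (Fintype.card_sum).symm
      (midEquiv t.1.1 t.1.2 (Sum.inl (t.2.1 v))) := rfl

lemma toLabel_apply_inr {V V' : Type*} [Fintype V] [Fintype V']
    (t : {s : Finset (Fin (Fintype.card V + Fintype.card V')) // s.card = Fintype.card V}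
      × (V ≃ Fin (Fintype.card V)) × (V' ≃ Fin (Fintype.card V'))) (v : V') :
    toLabel t (Sum.inr v) = finCongr (Fintype.card_sum).symm
      (midEquiv t.1.1 t.1.2 (Sum.inr (t.2.2 v))) := rfl

lemma finCongr_lt_iff {n m : ℕ} (h : n = m) (i j : Fin n) :
    finCongr h i < finCongr h j ↔ i < j := by
  subst h; rfl

lemma toLabel_mem_iff {V V' : Type*} [Fintype V] [Fintype V']
    (t : {s : Finset (Fin (Fintype.card V + Fintype.card V')) // s.card = Fintype.card V}
      × (V ≃ Fin (Fintype.card V)) × (V' ≃ Fin (Fintype.card V')))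
    (x : Fin (Fintype.card V + Fintype.card V')) :
    x ∈ t.1.1 ↔ ∃ v : V, toLabel t (Sum.inl v) = finCongr (Fintype.card_sum).symm x := by
  obtain ⟨⟨s, hs⟩, e, e'⟩ := t
  constructor
  · intro hx
    refine ⟨e.symm ((s.orderIsoOfFin hs).symm ⟨x, hx⟩), ?_⟩
    rw [toLabel_apply_inl]
    simp [midEquiv_inl]
  · rintro ⟨v, hv⟩
    rw [toLabel_apply_inl] at hv
    have := (finCongr (Fintype.card_sum (α := V) (β := V')).symm).injective hv
    rw [midEquiv_inl] at this
    rw [← this]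
    exact Finset.coe_mem _

lemma toLabel_injective {V V' : Type*} [Fintype V] [Fintype V'] :
    Function.Injective (toLabel (V := V) (V' := V')) := by
  rintro ⟨⟨s, hs⟩, e, e'⟩ ⟨⟨s', hs'⟩, f, f'⟩ hL
  have hss : s = s' := by
    ext x
    rw [show s = (⟨⟨s, hs⟩, e, e'⟩ :
        {s : Finset (Fin (Fintype.card V + Fintype.card V')) // s.card = Fintype.card V}
        × (V ≃ Fin (Fintype.card V)) × (V' ≃ Fin (Fintype.card V'))).1.1 from rfl,
      toLabel_mem_iff, hL, ← toLabel_mem_iff]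
  subst hss
  have hee : e = f := by
    ext v
    have h1 : toLabel (⟨⟨s, hs⟩, e, e'⟩ :
        {s : Finset (Fin (Fintype.card V + Fintype.card V')) // s.card = Fintype.card V}
        × (V ≃ Fin (Fintype.card V)) × (V' ≃ Fin (Fintype.card V'))) (Sum.inl v)
        = toLabel ⟨⟨s, hs'⟩, f, f'⟩ (Sum.inl v) := by rw [hL]
    rw [toLabel_apply_inl, toLabel_apply_inl] at h1
    have h2 := (finCongr (Fintype.card_sum (α := V) (β := V')).symm).injective h1
    have h3 := (midEquiv s hs).injective (by
      convert h2 using 2)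
    exact congrArg Fin.val (Sum.inl.inj h3)
  have hee' : e' = f' := by
    ext v
    have h1 : toLabel (⟨⟨s, hs⟩, e, e'⟩ :
        {s : Finset (Fin (Fintype.card V + Fintype.card V')) // s.card = Fintype.card V}
        × (V ≃ Fin (Fintype.card V)) × (V' ≃ Fin (Fintype.card V'))) (Sum.inr v)
        = toLabel ⟨⟨s, hs'⟩, f, f'⟩ (Sum.inr v) := by rw [hL]
    rw [toLabel_apply_inr, toLabel_apply_inr] at h1
    have h2 := (finCongr (Fintype.card_sum (α := V) (β := V')).symm).injective h1
    have h3 := (midEquiv s hs).injective (by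
      convert h2 using 2)
    exact congrArg Fin.val (Sum.inr.inj h3)
  subst hee; subst hee'
  rfl

lemma toLabel_bijective {V V' : Type*} [Fintype V] [Fintype V'] :
    Function.Bijective (toLabel (V := V) (V' := V')) := by
  classical
  rw [Fintype.bijective_iff_injective_and_card]
  refine ⟨toLabel_injective, ?_⟩
  rw [Fintype.card_prod, Fintype.card_prod, Fintype.card_finset_len,
    Fintype.card_equiv (Fintype.equivFin V), Fintype.card_equiv (Fintype.equivFin V'),
    Fintype.card_equiv (Fintype.equivFin (V ⊕ V')), Fintype.card_fin, Fintype.card_sum]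
  have h := Nat.choose_mul_factorial_mul_factorial
    (Nat.le_add_right (Fintype.card V) (Fintype.card V'))
  rw [Nat.add_sub_cancel_left] at h
  rw [← h]
  ring

open scoped Classical in
lemma inner_eq {V V' : Type*} [Fintype V] [Fintype V'] (G : SimpleGraph V) (G' : SimpleGraph V')
    (c : ℕ)
    (t : {s : Finset (Fin (Fintype.card V + Fintype.card V')) // s.card = Fintype.card V}
      × (V ≃ Fin (Fintype.card V)) × (V' ≃ Fin (Fintype.card V'))) :
    (∑ κ : V ⊕ V' → Fin c,
      if ∀ u v, (sumGraph G G').Adj u v → κ u ≠ κ v then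
        MvPolynomial.C (Polynomial.X ^ ascCount (sumGraph G G') (⇑(toLabel t)) κ) *
          ∏ v, MvPolynomial.X (κ v)
      else (0 : MvPolynomial (Fin c) (Polynomial ℚ))) =
    (∑ κ : V → Fin c,
      if ∀ u v, G.Adj u v → κ u ≠ κ v then
        MvPolynomial.C (Polynomial.X ^ ascCount G (⇑t.2.1) κ) * ∏ v, MvPolynomial.X (κ v)
      else (0 : MvPolynomial (Fin c) (Polynomial ℚ))) *
    (∑ κ : V' → Fin c,
      if ∀ u v, G'.Adj u v → κ u ≠ κ v then
        MvPolynomial.C (Polynomial.X ^ ascCount G' (⇑t.2.2) κ) * ∏ v, MvPolynomial.X (κ v)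
      else (0 : MvPolynomial (Fin c) (Polynomial ℚ))) := by
  rw [← Equiv.sum_comp (Equiv.sumArrowEquivProdArrow V V' (Fin c)).symm, Fintype.sum_prod_type,
    Finset.sum_mul_sum]
  refine Finset.sum_congr rfl fun κ₁ _ => Finset.sum_congr rfl fun κ₂ _ => ?_
  have hκ : (Equiv.sumArrowEquivProdArrow V V' (Fin c)).symm (κ₁, κ₂) = Sum.elim κ₁ κ₂ := rfl
  rw [hκ]
  have hasc : ascCount (sumGraph G G') (⇑(toLabel t)) (Sum.elim κ₁ κ₂) =
      ascCount G (⇑t.2.1) κ₁ + ascCount G' (⇑t.2.2) κ₂ := by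
    rw [ascCount_sum]
    congr 1
    · exact ascCount_congr G _ _ (fun u v => by
        rw [Function.comp_apply, Function.comp_apply, toLabel_apply_inl, toLabel_apply_inl,
          finCongr_lt_iff, midEquiv_inl_lt_iff]) κ₁
    · exact ascCount_congr G' _ _ (fun u v => by
        rw [Function.comp_apply, Function.comp_apply, toLabel_apply_inr, toLabel_apply_inr,
          finCongr_lt_iff, midEquiv_inr_lt_iff]) κ₂
  have hP : (∀ u v, (sumGraph G G').Adj u v → Sum.elim κ₁ κ₂ u ≠ Sum.elim κ₁ κ₂ v) ↔
      ((∀ u v, G.Adj u v → κ₁ u ≠ κ₁ v) ∧ ∀ u v, G'.Adj u v → κ₂ u ≠ κ₂ v) := by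
    constructor
    · intro h
      exact ⟨fun u v huv => h (Sum.inl u) (Sum.inl v) huv,
        fun u v huv => h (Sum.inr u) (Sum.inr v) huv⟩
    · rintro ⟨h1, h2⟩ (u | u) (v | v) huv
      · exact h1 u v huv
      · exact huv.elim
      · exact huv.elim
      · exact h2 u v huv
  have hprod : (∏ v : V ⊕ V', MvPolynomial.X (R := Polynomial ℚ) (Sum.elim κ₁ κ₂ v)) =
      (∏ v : V, MvPolynomial.X (κ₁ v)) * ∏ v : V', MvPolynomial.X (κ₂ v) :=
    Fintype.prod_sum_type _
  rw [hasc, if_congr hP rfl rfl]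
  by_cases h1 : ∀ u v, G.Adj u v → κ₁ u ≠ κ₁ v
  · by_cases h2 : ∀ u v, G'.Adj u v → κ₂ u ≠ κ₂ v
    · rw [if_pos ⟨h1, h2⟩, if_pos h1, if_pos h2, pow_add, map_mul, hprod]
      ring
    · rw [if_neg (fun h => h2 h.2), if_neg h2, mul_zero]
  · rw [if_neg (fun h => h1 h.1), if_neg h1, zero_mul]

lemma sum_snd {α β M : Type*} [Fintype α] [Fintype β] [AddCommMonoid M] (f : β → M) :
    ∑ x : α × β, f x.2 = (Fintype.card α) • ∑ y, f y := by
  rw [Fintype.sum_prod_type]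
  simp [Finset.card_univ]

lemma sum_mul_sum_prod {α β M : Type*} [Fintype α] [Fintype β] [NonUnitalNonAssocSemiring M]
    (f : α → M) (g : β → M) :
    ∑ x : α × β, f x.1 * g x.2 = (∑ a, f a) * ∑ b, g b := by
  rw [Fintype.sum_mul_sum, Fintype.sum_prod_type]

open scoped Classical in
lemma sum_label_eq {V V' : Type*} [Fintype V] [Fintype V'] (G : SimpleGraph V)
    (G' : SimpleGraph V') (c : ℕ) :
    (∑ L : V ⊕ V' ≃ Fin (Fintype.card (V ⊕ V')), ∑ κ : V ⊕ V' → Fin c,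
      if ∀ u v, (sumGraph G G').Adj u v → κ u ≠ κ v then
        MvPolynomial.C (Polynomial.X ^ ascCount (sumGraph G G') (⇑L) κ) *
          ∏ v, MvPolynomial.X (κ v)
      else 0) =
    ((Fintype.card V + Fintype.card V').choose (Fintype.card V) :
        MvPolynomial (Fin c) (Polynomial ℚ)) *
      (∑ L : V ≃ Fin (Fintype.card V), ∑ κ : V → Fin c,
        if ∀ u v, G.Adj u v → κ u ≠ κ v then
          MvPolynomial.C (Polynomial.X ^ ascCount G (⇑L) κ) * ∏ v, MvPolynomial.X (κ v)
        else 0) *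
      (∑ L : V' ≃ Fin (Fintype.card V'), ∑ κ : V' → Fin c,
        if ∀ u v, G'.Adj u v → κ u ≠ κ v then
          MvPolynomial.C (Polynomial.X ^ ascCount G' (⇑L) κ) * ∏ v, MvPolynomial.X (κ v)
        else 0) := by
  refine (Fintype.sum_bijective (toLabel (V := V) (V' := V')) toLabel_bijective _ _
    (fun t => rfl)).symm.trans ?_
  refine (Finset.sum_congr rfl fun t _ => inner_eq G G' c t).trans ?_
  refine (sum_snd (fun p : (V ≃ Fin (Fintype.card V)) × (V' ≃ Fin (Fintype.card V')) =>
    (∑ κ : V → Fin c,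
      if ∀ u v, G.Adj u v → κ u ≠ κ v then
        MvPolynomial.C (Polynomial.X ^ ascCount G (⇑p.1) κ) * ∏ v, MvPolynomial.X (κ v)
      else (0 : MvPolynomial (Fin c) (Polynomial ℚ))) *
    (∑ κ : V' → Fin c,
      if ∀ u v, G'.Adj u v → κ u ≠ κ v then
        MvPolynomial.C (Polynomial.X ^ ascCount G' (⇑p.2) κ) * ∏ v, MvPolynomial.X (κ v)
      else (0 : MvPolynomial (Fin c) (Polynomial ℚ))))).trans ?_
  have h4 := sum_mul_sum_prod
    (f := fun e : V ≃ Fin (Fintype.card V) => ∑ κ : V → Fin c,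
      if ∀ u v, G.Adj u v → κ u ≠ κ v then
        MvPolynomial.C (Polynomial.X ^ ascCount G (⇑e) κ) * ∏ v, MvPolynomial.X (κ v)
      else (0 : MvPolynomial (Fin c) (Polynomial ℚ)))
    (g := fun e : V' ≃ Fin (Fintype.card V') => ∑ κ : V' → Fin c,
      if ∀ u v, G'.Adj u v → κ u ≠ κ v then
        MvPolynomial.C (Polynomial.X ^ ascCount G' (⇑e) κ) * ∏ v, MvPolynomial.X (κ v)
      else (0 : MvPolynomial (Fin c) (Polynomial ℚ)))
  rw [congrArg (HSMul.hSMul (Fintype.card {s : Finset (Fin (Fintype.card V + Fintype.card V')) //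
      s.card = Fintype.card V})) h4, Fintype.card_finset_len, Fintype.card_fin, nsmul_eq_mul,
    mul_assoc]

set_option maxHeartbeats 4000000 in
open scoped Classical in
lemma TchiL_eq' {V V' : Type*} [Fintype V] [Fintype V'] (H : SimpleGraph (V ⊕ V')) (c : ℕ) :
    TchiL H c = ∑ L : V ⊕ V' ≃ Fin (Fintype.card (V ⊕ V')), ∑ κ : V ⊕ V' → Fin c,
      if ∀ u v, H.Adj u v → κ u ≠ κ v then
        MvPolynomial.C (Polynomial.X ^ ascCount H (⇑L) κ) * ∏ v, MvPolynomial.X (κ v)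
      else 0 := by
  rw [TchiL_eq]
  refine Finset.sum_congr (by congr 1; exact Subsingleton.elim _ _) fun L _ => ?_
  refine Finset.sum_congr (by congr 1; exact Subsingleton.elim _ _) fun κ _ => rfl

theorem stmt17 {V V' : Type*} [Fintype V] [Fintype V']
    (G : SimpleGraph V) (G' : SimpleGraph V') (c : ℕ) :
    TchiL (sumGraph G G') c =
      ((Fintype.card V + Fintype.card V').choose (Fintype.card V) :
          MvPolynomial (Fin c) (Polynomial ℚ)) *
        TchiL G c * TchiL G' c := by
  rw [TchiL_eq', TchiL_eq G, TchiL_eq G']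
  exact sum_label_eq G G' c
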